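/- arXiv:1406.6592 — 3 statements merged into one kernel-verified Lean document; each statement's English description precedes it below -/
import Mathlib

section
/- Let B and O be nonempty finite types, let m, M > 0, let C and Ĉ be symmetric real matrices indexed by O with m·I ⪯ C and m·I ⪯ Ĉ (so both are positive definite, hence invertible), and let D and D̂ be real B × O matrices with ‖D‖ ≤ M. Then ‖D̂ Ĉ⁻¹ − D C⁻¹‖ ≤ (1/m)·‖D̂ − D‖ + (M/m²)·‖Ĉ − C‖. -/
open Matrix

/-- The ℓ²→ℓ² operator norm of a real matrix (the norm induced by the Euclidean
norms on the domain and codomain). -/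
noncomputable def l2OpNorm {α β : Type*} [Fintype α] [Fintype β] [DecidableEq β]
    (M : Matrix α β ℝ) : ℝ :=
  ‖LinearMap.toContinuousLinearMap (Matrix.toEuclideanLin M)‖

open scoped Matrix.Norms.L2Operator

lemma l2OpNorm_eq_norm {α β : Type*} [Fintype α] [Fintype β] [DecidableEq β]
    (A : Matrix α β ℝ) : l2OpNorm A = ‖A‖ := rfl

lemma posDef_of_shift {O : Type*} [Fintype O] [DecidableEq O] {m : ℝ} (hm : 0 < m)
    {C : Matrix O O ℝ} (hC : (C - m • (1 : Matrix O O ℝ)).PosSemidef) : C.PosDef := by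
  have h1 : (m • (1 : Matrix O O ℝ)).PosDef := by
    refine Matrix.PosDef.of_dotProduct_mulVec_pos ?_ ?_
    · simp [Matrix.IsHermitian]
    · intro x hx
      have hv : (m • (1 : Matrix O O ℝ)) *ᵥ x = m • x := by
        simp [smul_mulVec]
      rw [hv, dotProduct_smul]
      exact smul_pos hm (dotProduct_star_self_pos_iff.mpr hx)
  have hsum : C = (C - m • 1) + m • 1 := (sub_add_cancel _ _).symm
  rw [hsum]
  exact Matrix.PosDef.posSemidef_add hC h1

lemma mulVec_lower {O : Type*} [Fintype O] [DecidableEq O] {m : ℝ} (hm : 0 < m)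
    {C : Matrix O O ℝ} (hC : (C - m • (1 : Matrix O O ℝ)).PosSemidef)
    (x : EuclideanSpace ℝ O) : m * ‖x‖ ≤ ‖Matrix.toEuclideanLin C x‖ := by
  rcases eq_or_ne x 0 with rfl | hx
  · simp
  set v : O → ℝ := WithLp.equiv 2 _ x with hvdef
  have h0 := (posSemidef_iff_dotProduct_mulVec.mp hC).2 v
  have hexp : dotProduct (star v) ((C - m • (1 : Matrix O O ℝ)) *ᵥ v)
      = dotProduct (star v) (C *ᵥ v) - m * dotProduct (star v) v := by
    rw [sub_mulVec, dotProduct_sub]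
    congr 1
    rw [smul_mulVec, one_mulVec, dotProduct_smul, smul_eq_mul]
  have hself : dotProduct (star v) v = ‖x‖ * ‖x‖ := by
    have := real_inner_self_eq_norm_mul_norm x
    rw [EuclideanSpace.inner_eq_star_dotProduct] at this
    exact this
  have hinner : dotProduct (star v) (C *ᵥ v) = inner (𝕜 := ℝ) x (Matrix.toEuclideanLin C x) := by
    rw [EuclideanSpace.inner_eq_star_dotProduct, Matrix.ofLp_toEuclideanLin_apply]
    exact dotProduct_comm _ _
  have hCS : inner (𝕜 := ℝ) x (Matrix.toEuclideanLin C x)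
      ≤ ‖x‖ * ‖Matrix.toEuclideanLin C x‖ := real_inner_le_norm _ _
  have key : m * (‖x‖ * ‖x‖) ≤ ‖x‖ * ‖Matrix.toEuclideanLin C x‖ := by
    rw [hexp, hinner, hself] at h0
    linarith
  have hxpos : 0 < ‖x‖ := norm_pos_iff.mpr hx
  have : m * ‖x‖ * ‖x‖ ≤ ‖Matrix.toEuclideanLin C x‖ * ‖x‖ := by
    nlinarith
  exact le_of_mul_le_mul_right this hxpos

lemma norm_inv_le {O : Type*} [Fintype O] [DecidableEq O] {m : ℝ} (hm : 0 < m)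
    {C : Matrix O O ℝ} (hC : (C - m • (1 : Matrix O O ℝ)).PosSemidef) : ‖C⁻¹‖ ≤ 1 / m := by
  have hpd := posDef_of_shift hm hC
  have hmul : C * C⁻¹ = 1 := mul_nonsing_inv C ((isUnit_iff_isUnit_det _).1 hpd.isUnit)
  rw [Matrix.l2_opNorm_def]
  refine ContinuousLinearMap.opNorm_le_bound _ (by positivity) (fun y => ?_)
  set x : EuclideanSpace ℝ O := Matrix.toEuclideanLin C⁻¹ y with hxdef
  have hCx : Matrix.toEuclideanLin C x = y := by
    rw [hxdef]
    simp [Matrix.toEuclideanLin_apply, Matrix.mulVec_mulVec, hmul]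
  have hlow := mulVec_lower hm hC x
  rw [hCx] at hlow
  have : ‖x‖ ≤ 1 / m * ‖y‖ := by
    rw [div_mul_eq_mul_div, le_div_iff₀ hm]
    linarith
  simpa using this

theorem stmt0 {B O : Type*} [Fintype B] [Fintype O] [Nonempty B] [Nonempty O] [DecidableEq O]
    (m M : ℝ) (hm : 0 < m) (hM : 0 < M)
    (C Chat : Matrix O O ℝ) (hCsymm : C.IsSymm) (hChatsymm : Chat.IsSymm)
    (hC : (C - m • (1 : Matrix O O ℝ)).PosSemidef)
    (hChat : (Chat - m • (1 : Matrix O O ℝ)).PosSemidef)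
    (D Dhat : Matrix B O ℝ) (hD : l2OpNorm D ≤ M) :
    l2OpNorm (Dhat * Chat⁻¹ - D * C⁻¹) ≤
      (1 / m) * l2OpNorm (Dhat - D) + (M / m ^ 2) * l2OpNorm (Chat - C) := by
  simp only [l2OpNorm_eq_norm] at *
  have hCpd := posDef_of_shift hm hC
  have hChatpd := posDef_of_shift hm hChat
  have hCmul : C⁻¹ * C = 1 := nonsing_inv_mul C ((isUnit_iff_isUnit_det _).1 hCpd.isUnit)
  have hChatmul : Chat * Chat⁻¹ = 1 :=
    mul_nonsing_inv Chat ((isUnit_iff_isUnit_det _).1 hChatpd.isUnit)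
  have hCinv : ‖C⁻¹‖ ≤ 1 / m := norm_inv_le hm hC
  have hChatinv : ‖Chat⁻¹‖ ≤ 1 / m := norm_inv_le hm hChat
  have hsplit : Dhat * Chat⁻¹ - D * C⁻¹
      = (Dhat - D) * Chat⁻¹ + D * C⁻¹ * (C - Chat) * Chat⁻¹ := by
    have h1 : D * C⁻¹ * (C - Chat) * Chat⁻¹ = D * Chat⁻¹ - D * C⁻¹ := by
      rw [Matrix.mul_sub, Matrix.sub_mul]
      rw [Matrix.mul_assoc (D * C⁻¹) Chat Chat⁻¹, hChatmul, Matrix.mul_one]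
      rw [Matrix.mul_assoc D C⁻¹ C, hCmul, Matrix.mul_one]
    rw [h1, Matrix.sub_mul]
    abel
  rw [hsplit]
  have t1 : ‖(Dhat - D) * Chat⁻¹‖ ≤ ‖Dhat - D‖ * (1 / m) := by
    calc ‖(Dhat - D) * Chat⁻¹‖ ≤ ‖Dhat - D‖ * ‖Chat⁻¹‖ := Matrix.l2_opNorm_mul _ _
    _ ≤ ‖Dhat - D‖ * (1 / m) := by
        exact mul_le_mul_of_nonneg_left hChatinv (norm_nonneg _)
  have t2 : ‖D * C⁻¹ * (C - Chat) * Chat⁻¹‖ ≤ M * (1 / m) * ‖Chat - C‖ * (1 / m) := by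
    have e1 : ‖D * C⁻¹ * (C - Chat) * Chat⁻¹‖ ≤ ‖D * C⁻¹ * (C - Chat)‖ * ‖Chat⁻¹‖ :=
      Matrix.l2_opNorm_mul _ _
    have e2 : ‖D * C⁻¹ * (C - Chat)‖ ≤ ‖D * C⁻¹‖ * ‖C - Chat‖ := Matrix.l2_opNorm_mul _ _
    have e3 : ‖D * C⁻¹‖ ≤ ‖D‖ * ‖C⁻¹‖ := Matrix.l2_opNorm_mul _ _
    have hrev : ‖C - Chat‖ = ‖Chat - C‖ := norm_sub_rev _ _
    have hDn : (0:ℝ) ≤ ‖D‖ := norm_nonneg _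
    have hn1 : (0:ℝ) ≤ ‖C - Chat‖ := norm_nonneg _
    have hn2 : (0:ℝ) ≤ ‖Chat⁻¹‖ := norm_nonneg _
    have hn3 : (0:ℝ) ≤ ‖C⁻¹‖ := norm_nonneg _
    have hn4 : (0:ℝ) ≤ ‖D * C⁻¹‖ := norm_nonneg _
    have hn5 : (0:ℝ) ≤ ‖D * C⁻¹ * (C - Chat)‖ := norm_nonneg _
    have hmn : (0:ℝ) ≤ 1 / m := by positivity
    calc ‖D * C⁻¹ * (C - Chat) * Chat⁻¹‖
        ≤ ‖D * C⁻¹ * (C - Chat)‖ * ‖Chat⁻¹‖ := e1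
      _ ≤ (‖D * C⁻¹‖ * ‖C - Chat‖) * ‖Chat⁻¹‖ := by
          exact mul_le_mul_of_nonneg_right e2 hn2
      _ ≤ ((‖D‖ * ‖C⁻¹‖) * ‖C - Chat‖) * ‖Chat⁻¹‖ := by
          exact mul_le_mul_of_nonneg_right (mul_le_mul_of_nonneg_right e3 hn1) hn2
      _ ≤ M * (1 / m) * ‖Chat - C‖ * (1 / m) := by
          rw [← hrev]
          have h1 : ‖D‖ * ‖C⁻¹‖ ≤ M * (1 / m) :=
            mul_le_mul hD hCinv hn3 hM.le
          have h2 : ‖D‖ * ‖C⁻¹‖ * ‖C - Chat‖ ≤ M * (1 / m) * ‖C - Chat‖ :=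
            mul_le_mul_of_nonneg_right h1 hn1
          exact mul_le_mul h2 hChatinv hn2 (by positivity)
  calc ‖(Dhat - D) * Chat⁻¹ + D * C⁻¹ * (C - Chat) * Chat⁻¹‖
      ≤ ‖(Dhat - D) * Chat⁻¹‖ + ‖D * C⁻¹ * (C - Chat) * Chat⁻¹‖ := norm_add_le _ _
    _ ≤ ‖Dhat - D‖ * (1 / m) + M * (1 / m) * ‖Chat - C‖ * (1 / m) := add_le_add t1 t2
    _ = (1 / m) * ‖Dhat - D‖ + (M / m ^ 2) * ‖Chat - C‖ := by ring
end

section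
/- Let G be a simple graph on a finite vertex type V such that every vertex has degree at most d, with d ≥ 1, and let A = (1/d)·A_G be the normalized adjacency matrix over ℝ. Let c : ℕ → ℝ be a sequence with ∑_k |c_k| < ∞, and set K = ∑_{k=0}^∞ c_k A^k. Let S and T be subsets of V and D ∈ ℕ such that for every s ∈ S and t ∈ T, either s and t are not reachable from one another or dist_G(s, t) ≥ D. Then the submatrix of K with rows in S and columns in T satisfies ‖K_{S,T}‖ ≤ ∑_{k ≥ D} |c_k|. -/
open Matrix

section Aux

variable {V ι κ : Type*} [Fintype V] [DecidableEq V]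

open scoped Matrix.Norms.L2Operator in
lemma aux_l2OpNorm_eq {α β : Type*} [Fintype α] [Fintype β] [DecidableEq β]
    (M : Matrix α β ℝ) : l2OpNorm M = ‖M‖ := rfl

open scoped Matrix.Norms.L2Operator in
lemma aux_norm_select_le [Fintype ι] (f : ι → V) (hf : Function.Injective f) :
    ‖(1 : Matrix V V ℝ).submatrix f id‖ ≤ 1 := by
  rw [Matrix.l2_opNorm_def]
  refine ContinuousLinearMap.opNorm_le_bound _ zero_le_one fun x => ?_
  rw [one_mul, LinearEquiv.trans_apply]
  simp only [LinearMap.coe_toContinuousLinearMap']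
  have hx : ∀ i, (Matrix.toEuclideanLin ((1 : Matrix V V ℝ).submatrix f id) x) i = x (f i) := by
    intro i
    simp [Matrix.toEuclideanLin_apply, Matrix.mulVec, dotProduct, Matrix.one_apply,
      Matrix.submatrix_apply, ite_mul]
  rw [EuclideanSpace.norm_eq, EuclideanSpace.norm_eq]
  apply Real.sqrt_le_sqrt
  calc ∑ i, ‖(Matrix.toEuclideanLin ((1 : Matrix V V ℝ).submatrix f id) x) i‖ ^ 2
      = ∑ i, ‖x (f i)‖ ^ 2 := by
        exact Finset.sum_congr rfl fun i _ => by rw [hx]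
    _ = ∑ v ∈ Finset.univ.image f, ‖x v‖ ^ 2 :=
        (Finset.sum_image (f := fun v => ‖x v‖ ^ 2) (g := f)
          (fun a _ b _ h => hf h)).symm
    _ ≤ ∑ v, ‖x v‖ ^ 2 :=
        Finset.sum_le_sum_of_subset_of_nonneg (Finset.subset_univ _)
          (fun _ _ _ => by positivity)

open scoped Matrix.Norms.L2Operator in
lemma aux_norm_submatrix_le [Fintype ι] [Fintype κ] [DecidableEq κ] (M : Matrix V V ℝ)
    (f : ι → V) (g : κ → V) (hf : Function.Injective f) (hg : Function.Injective g) :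
    l2OpNorm (M.submatrix f g) ≤ l2OpNorm M := by
  rw [aux_l2OpNorm_eq, aux_l2OpNorm_eq]
  have hfac : M.submatrix f g =
      (1 : Matrix V V ℝ).submatrix f id * M * ((1 : Matrix V V ℝ).submatrix g id)ᴴ := by
    ext i j
    simp [Matrix.mul_apply, Matrix.one_apply, Matrix.conjTranspose_apply,
      Matrix.submatrix_apply, ite_mul, mul_ite, Finset.sum_ite_eq, Finset.sum_ite_eq']
  rw [hfac]
  have h1 := aux_norm_select_le f hf
  have h2 := aux_norm_select_le g hg
  have h3 : ‖((1 : Matrix V V ℝ).submatrix g id)ᴴ‖ = ‖(1 : Matrix V V ℝ).submatrix g id‖ :=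
    Matrix.l2_opNorm_conjTranspose _
  have t1 : ‖(1 : Matrix V V ℝ).submatrix f id * M‖ ≤ ‖M‖ :=
    le_trans (Matrix.l2_opNorm_mul _ _) (mul_le_of_le_one_left (norm_nonneg M) h1)
  calc ‖(1 : Matrix V V ℝ).submatrix f id * M * ((1 : Matrix V V ℝ).submatrix g id)ᴴ‖
      ≤ ‖(1 : Matrix V V ℝ).submatrix f id * M‖ * ‖((1 : Matrix V V ℝ).submatrix g id)ᴴ‖ :=
        Matrix.l2_opNorm_mul _ _
    _ ≤ ‖M‖ * 1 := by
        rw [h3]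
        exact mul_le_mul t1 h2 (norm_nonneg _) (norm_nonneg _)
    _ = ‖M‖ := mul_one _

open scoped Matrix.Norms.L2Operator in
lemma aux_norm_one_le : l2OpNorm (1 : Matrix V V ℝ) ≤ 1 := by
  rw [aux_l2OpNorm_eq, Matrix.l2_opNorm_def]
  refine ContinuousLinearMap.opNorm_le_bound _ zero_le_one fun x => ?_
  rw [one_mul, LinearEquiv.trans_apply]
  simp only [LinearMap.coe_toContinuousLinearMap']
  have : Matrix.toEuclideanLin (1 : Matrix V V ℝ) x = x := by
    ext i
    simp [Matrix.toEuclideanLin_apply, Matrix.one_mulVec]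
  rw [this]

open scoped Matrix.Norms.L2Operator in
lemma aux_norm_pow_le (M : Matrix V V ℝ) (h : l2OpNorm M ≤ 1) (k : ℕ) :
    l2OpNorm (M ^ k) ≤ 1 := by
  rw [aux_l2OpNorm_eq] at h ⊢
  induction k with
  | zero => rw [pow_zero]; exact le_trans (le_of_eq (aux_l2OpNorm_eq _).symm) aux_norm_one_le
  | succ k ih =>
    rw [pow_succ]
    refine le_trans (Matrix.l2_opNorm_mul _ _) ?_
    have h0 : (0:ℝ) ≤ ‖M ^ k‖ := norm_nonneg _
    nlinarith [norm_nonneg M]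

open scoped Matrix.Norms.L2Operator in
lemma aux_summable (c : ℕ → ℝ) (hc : Summable fun k => |c k|) (M : Matrix V V ℝ)
    (hM : l2OpNorm M ≤ 1) : Summable (fun k => c k • M ^ k) := by
  have hb : ∀ k, ‖c k • M ^ k‖ ≤ |c k| := fun k => by
    rw [norm_smul, Real.norm_eq_abs]
    exact mul_le_of_le_one_right (abs_nonneg _)
      ((aux_norm_pow_le M hM k).trans_eq' (aux_l2OpNorm_eq _).symm)
  exact Summable.of_norm (hc.of_nonneg_of_le (fun k => norm_nonneg _) hb)

lemma aux_vanish (G : SimpleGraph V) [DecidableRel G.Adj] (d : ℕ)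
    (S T : Finset V) (D : ℕ)
    (hST : ∀ s ∈ S, ∀ t ∈ T, ¬ G.Reachable s t ∨ D ≤ G.dist s t)
    (k : ℕ) (hk : k < D) :
    (((1 / (d : ℝ)) • G.adjMatrix ℝ) ^ k).submatrix (fun i : S => (i : V))
      (fun j : T => (j : V)) = 0 := by
  ext i j
  have hadj : (G.adjMatrix ℝ ^ k) (i : V) (j : V) = 0 := by
    rw [SimpleGraph.adjMatrix_pow_apply_eq_card_walk]
    norm_cast
    rw [Fintype.card_eq_zero_iff]
    refine ⟨fun p => ?_⟩
    rcases hST i i.2 j j.2 with h | h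
    · exact h ⟨p.1⟩
    · have hd : G.dist (i : V) (j : V) ≤ k := le_of_le_of_eq (SimpleGraph.dist_le p.1) p.2
      omega
  simp [Matrix.submatrix_apply, smul_pow, Matrix.smul_apply, hadj]

open scoped Matrix.Norms.L2Operator in
lemma aux_norm_adj_le (G : SimpleGraph V) [DecidableRel G.Adj]
    (d : ℕ) (hd1 : 1 ≤ d) (hdeg : ∀ v : V, G.degree v ≤ d) :
    l2OpNorm ((1 / (d : ℝ)) • G.adjMatrix ℝ) ≤ 1 := by
  have hd0 : (0 : ℝ) < d := by exact_mod_cast hd1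
  rw [aux_l2OpNorm_eq, Matrix.l2_opNorm_def]
  refine ContinuousLinearMap.opNorm_le_bound _ zero_le_one fun x => ?_
  rw [one_mul, LinearEquiv.trans_apply]
  simp only [LinearMap.coe_toContinuousLinearMap']
  set M : Matrix V V ℝ := (1 / (d : ℝ)) • G.adjMatrix ℝ with hM
  have happ : ∀ s, (Matrix.toEuclideanLin M x) s
      = (1 / (d : ℝ)) * ∑ t ∈ G.neighborFinset s, x t := by
    intro s
    simp [hM, Matrix.toEuclideanLin_apply, Matrix.smul_mulVec]
  have hswap : ∑ s, ∑ t ∈ G.neighborFinset s, (x t) ^ 2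
      = ∑ t, (G.degree t : ℝ) * (x t) ^ 2 := by
    have h1 : ∀ s, ∑ t ∈ G.neighborFinset s, (x t) ^ 2
        = ∑ t, if G.Adj s t then (x t) ^ 2 else 0 := by
      intro s
      rw [SimpleGraph.neighborFinset_eq_filter, Finset.sum_filter]
    simp_rw [h1]
    rw [Finset.sum_comm]
    refine Finset.sum_congr rfl fun t _ => ?_
    have h2 : ∀ s, (if G.Adj s t then (x t) ^ 2 else 0)
        = (if G.Adj t s then (x t) ^ 2 else 0) := fun s =>
          if_congr (G.adj_comm s t) rfl rfl
    simp_rw [h2]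
    rw [← Finset.sum_filter, ← SimpleGraph.neighborFinset_eq_filter, Finset.sum_const,
      nsmul_eq_mul]
    rfl
  rw [EuclideanSpace.norm_eq, EuclideanSpace.norm_eq]
  apply Real.sqrt_le_sqrt
  calc ∑ s, ‖(Matrix.toEuclideanLin M x) s‖ ^ 2
      = ∑ s, (1 / (d : ℝ)) ^ 2 * (∑ t ∈ G.neighborFinset s, x t) ^ 2 := by
        refine Finset.sum_congr rfl fun s _ => ?_
        rw [happ s, Real.norm_eq_abs, sq_abs, mul_pow]
    _ ≤ ∑ s, (1 / (d : ℝ)) ^ 2 * ((d : ℝ) * ∑ t ∈ G.neighborFinset s, (x t) ^ 2) := by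
        refine Finset.sum_le_sum fun s _ => ?_
        refine mul_le_mul_of_nonneg_left ?_ (by positivity)
        calc (∑ t ∈ G.neighborFinset s, x t) ^ 2
            ≤ (G.neighborFinset s).card * ∑ t ∈ G.neighborFinset s, (x t) ^ 2 :=
              sq_sum_le_card_mul_sum_sq
          _ ≤ (d : ℝ) * ∑ t ∈ G.neighborFinset s, (x t) ^ 2 := by
              refine mul_le_mul_of_nonneg_right ?_ (by positivity)
              exact_mod_cast hdeg s
    _ = (1 / (d : ℝ)) ^ 2 * (d : ℝ) * ∑ s, ∑ t ∈ G.neighborFinset s, (x t) ^ 2 := by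
        rw [Finset.mul_sum]
        exact Finset.sum_congr rfl fun s _ => by ring
    _ = (1 / (d : ℝ)) ^ 2 * (d : ℝ) * ∑ t, (G.degree t : ℝ) * (x t) ^ 2 := by rw [hswap]
    _ ≤ (1 / (d : ℝ)) ^ 2 * (d : ℝ) * ((d : ℝ) * ∑ t, (x t) ^ 2) := by
        refine mul_le_mul_of_nonneg_left ?_ (by positivity)
        rw [Finset.mul_sum]
        refine Finset.sum_le_sum fun t _ => ?_
        refine mul_le_mul_of_nonneg_right ?_ (by positivity)
        exact_mod_cast hdeg t
    _ = ∑ t, (x t) ^ 2 := by field_simp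
    _ = ∑ t, ‖x t‖ ^ 2 := by
        exact Finset.sum_congr rfl fun t _ => by rw [Real.norm_eq_abs, sq_abs]

end Aux

theorem stmt6 {V : Type*} [Fintype V] [DecidableEq V]
    (G : SimpleGraph V) [DecidableRel G.Adj]
    (d : ℕ) (hd1 : 1 ≤ d) (hdeg : ∀ v : V, G.degree v ≤ d)
    (A : Matrix V V ℝ) (hA : A = (1 / (d : ℝ)) • G.adjMatrix ℝ)
    (c : ℕ → ℝ) (hc : Summable fun k => |c k|)
    (K : Matrix V V ℝ) (hK : K = ∑' k : ℕ, c k • A ^ k)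
    (S T : Finset V) (D : ℕ)
    (hST : ∀ s ∈ S, ∀ t ∈ T, ¬ G.Reachable s t ∨ D ≤ G.dist s t) :
    l2OpNorm (K.submatrix (fun i : S => (i : V)) (fun j : T => (j : V))) ≤
      ∑' k : {k : ℕ // D ≤ k}, |c k| := by
  classical
  have hf : Function.Injective (fun i : S => (i : V)) := Subtype.val_injective
  have hg : Function.Injective (fun j : T => (j : V)) := Subtype.val_injective
  have hAnorm : l2OpNorm A ≤ 1 := by rw [hA]; exact aux_norm_adj_le G d hd1 hdeg
  let Φ : Matrix V V ℝ →ₗ[ℝ] (EuclideanSpace ℝ T →L[ℝ] EuclideanSpace ℝ S) :=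
    { toFun := fun M => LinearMap.toContinuousLinearMap
        (Matrix.toEuclideanLin (M.submatrix (fun i : S => (i : V)) (fun j : T => (j : V))))
      map_add' := fun M N => by simp [Matrix.submatrix_add, map_add]
      map_smul' := fun r M => by simp [Matrix.submatrix_smul, _root_.map_smul] }
  have hΦcont : Continuous Φ := Φ.continuous_of_finiteDimensional
  have hKsum : Summable (fun k => c k • A ^ k) := aux_summable c hc A hAnorm
  have hΦK : Φ K = ∑' k, Φ (c k • A ^ k) := by
    rw [hK]
    exact ((hKsum.hasSum.map Φ.toAddMonoidHom hΦcont).tsum_eq).symm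
  have hΦnorm : ∀ k, ‖Φ (A ^ k)‖ ≤ 1 := fun k => by
    have : ‖Φ (A ^ k)‖ = l2OpNorm ((A ^ k).submatrix (fun i : S => (i : V))
        (fun j : T => (j : V))) := rfl
    rw [this]
    exact le_trans (aux_norm_submatrix_le _ _ _ hf hg) (aux_norm_pow_le A hAnorm k)
  have hb : ∀ k, ‖Φ (c k • A ^ k)‖ ≤ |c k| := fun k => by
    rw [Φ.map_smul, norm_smul, Real.norm_eq_abs]
    exact mul_le_of_le_one_right (abs_nonneg _) (hΦnorm k)
  have hbsum : Summable (fun k => ‖Φ (c k • A ^ k)‖) :=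
    hc.of_nonneg_of_le (fun _ => norm_nonneg _) hb
  have hzero : ∀ k, k < D → ‖Φ (c k • A ^ k)‖ = 0 := by
    intro k hk
    have h0 : (A ^ k).submatrix (fun i : S => (i : V)) (fun j : T => (j : V)) = 0 := by
      rw [hA]; exact aux_vanish G d S T D hST k hk
    rw [Φ.map_smul]
    have : Φ (A ^ k) = 0 := by
      show LinearMap.toContinuousLinearMap (Matrix.toEuclideanLin
        ((A ^ k).submatrix (fun i : S => (i : V)) (fun j : T => (j : V)))) = 0
      rw [h0]
      simp
    rw [this, smul_zero, norm_zero]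
  have hLHS : l2OpNorm (K.submatrix (fun i : S => (i : V)) (fun j : T => (j : V)))
      = ‖Φ K‖ := rfl
  rw [hLHS]
  calc ‖Φ K‖ ≤ ∑' k, ‖Φ (c k • A ^ k)‖ := by
        rw [hΦK]; exact norm_tsum_le_tsum_norm hbsum
    _ = ∑' k : {k : ℕ // D ≤ k}, ‖Φ (c (k : ℕ) • A ^ (k : ℕ))‖ := by
        refine (tsum_subtype_eq_of_support_subset ?_).symm
        intro k hk
        by_contra hkD
        exact hk (hzero k (lt_of_not_ge hkD))
    _ ≤ ∑' k : {k : ℕ // D ≤ k}, |c k| := by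
        refine Summable.tsum_le_tsum (fun k => hb k) (hbsum.subtype _) (hc.subtype _)
end

section
/- Let B and O be nonempty finite types, let 0 < m ≤ M, and let K be a symmetric real matrix indexed by B ⊕ O with m·I ⪯ K ⪯ M·I. Let (Ω, μ) be a probability space, X : Ω → (B ⊕ O → ℝ) a measurable map with ω ↦ (∑_{i ∈ O} X(ω)_i²)² integrable, and K̂ : Ω → (symmetric real matrices indexed by B ⊕ O) a measurable map such that for μ-almost every ω, m·I ⪯ K̂(ω) ⪯ M·I, and such that ∫ ‖K̂(ω) − K‖⁴ dμ(ω) ≤ r⁴ for some r ≥ 0. For a : B → ℝ with ‖a‖ = 1, set Z̄(ω) = aᵀ K_{BO}(K_O)⁻¹ X(ω)_O and Ẑ(ω) = aᵀ K̂(ω)_{BO}(K̂(ω)_O)⁻¹ X(ω)_O. Then (∫ (Ẑ − Z̄)² dμ)^{1/2} ≤ ((m + M)/m²) · ( ∫ (∑_{i ∈ O} X(ω)_i²)² dμ(ω) )^{1/4} · r. -/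
open Matrix MeasureTheory

section Aux
variable {n : Type*} [Fintype n] [DecidableEq n]

lemma l2OpNorm_nonneg (C : Matrix n n ℝ) : 0 ≤ l2OpNorm C := norm_nonneg _

lemma l2_mulVec_sqrt (C : Matrix n n ℝ) (x : n → ℝ) :
    Real.sqrt (∑ i, (C.mulVec x i)^2) ≤ l2OpNorm C * Real.sqrt (∑ i, (x i)^2) := by
  have h := (LinearMap.toContinuousLinearMap (Matrix.toEuclideanLin C)).le_opNorm
      ((WithLp.equiv 2 (n → ℝ)).symm x)
  rw [EuclideanSpace.norm_eq, EuclideanSpace.norm_eq] at h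
  simpa only [LinearMap.coe_toContinuousLinearMap', Matrix.toEuclideanLin_apply,
    WithLp.equiv_symm_apply, WithLp.ofLp_toLp, Equiv.apply_symm_apply, Real.norm_eq_abs, sq_abs, l2OpNorm] using h

lemma l2OpNorm_le_of_mulVec {C : Matrix n n ℝ} {N : ℝ} (hN : 0 ≤ N)
    (h : ∀ x : n → ℝ, Real.sqrt (∑ i, (C.mulVec x i)^2) ≤ N * Real.sqrt (∑ i, (x i)^2)) :
    l2OpNorm C ≤ N := by
  refine ContinuousLinearMap.opNorm_le_bound _ hN fun v => ?_
  have h' := h ((WithLp.equiv 2 (n → ℝ)) v)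
  rw [EuclideanSpace.norm_eq, EuclideanSpace.norm_eq]
  simpa only [LinearMap.coe_toContinuousLinearMap', Matrix.toEuclideanLin_apply,
    WithLp.equiv_apply, Equiv.apply_symm_apply, Real.norm_eq_abs, sq_abs] using h'

lemma vecMul_symm {C : Matrix n n ℝ} (hC : C.IsSymm) (y : n → ℝ) :
    y ᵥ* C = C *ᵥ y := by
  conv_lhs => rw [← hC]
  exact vecMul_transpose C y

lemma dot_symm {C : Matrix n n ℝ} (hC : C.IsSymm) (y z : n → ℝ) :
    y ⬝ᵥ C *ᵥ z = z ⬝ᵥ C *ᵥ y := by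
  rw [dotProduct_mulVec, dotProduct_comm, vecMul_symm hC]

lemma dot_self_sum (z : n → ℝ) : z ⬝ᵥ z = ∑ i, (z i)^2 := by
  simp [dotProduct, sq]

lemma quad_le_of_psd_sub {C : Matrix n n ℝ} {M : ℝ}
    (hMC : (M • (1 : Matrix n n ℝ) - C).PosSemidef) (z : n → ℝ) :
    z ⬝ᵥ C *ᵥ z ≤ M * ∑ i, (z i)^2 := by
  have h := hMC.dotProduct_mulVec_nonneg z
  simp only [star_trivial, sub_mulVec, dotProduct_sub, smul_mulVec, one_mulVec,
    dotProduct_smul, smul_eq_mul] at h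
  rw [dot_self_sum] at h
  linarith

lemma quad_ge_of_psd_sub {C : Matrix n n ℝ} {m : ℝ}
    (hlo : (C - m • (1 : Matrix n n ℝ)).PosSemidef) (z : n → ℝ) :
    m * ∑ i, (z i)^2 ≤ z ⬝ᵥ C *ᵥ z := by
  have h := hlo.dotProduct_mulVec_nonneg z
  simp only [star_trivial, sub_mulVec, dotProduct_sub, smul_mulVec, one_mulVec,
    dotProduct_smul, smul_eq_mul] at h
  rw [dot_self_sum] at h
  linarith

lemma mulVec_sq_le_of_bounds {C : Matrix n n ℝ} {M : ℝ} (hM : 0 < M) (hC : C.IsSymm)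
    (h0 : C.PosSemidef) (hhi : (M • (1 : Matrix n n ℝ) - C).PosSemidef) (x : n → ℝ) :
    Real.sqrt (∑ i, (C.mulVec x i)^2) ≤ M * Real.sqrt (∑ i, (x i)^2) := by
  set y := C *ᵥ x with hy
  have hxy : x ⬝ᵥ C *ᵥ y = ∑ i, (y i)^2 := by
    rw [dotProduct_mulVec, vecMul_symm hC, ← hy]
    exact dot_self_sum y
  have hz := h0.dotProduct_mulVec_nonneg (M • x - y)
  simp only [star_trivial, mulVec_sub, dotProduct_sub, sub_dotProduct, mulVec_smul,
    dotProduct_smul, smul_dotProduct, smul_eq_mul] at hz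
  have hyx : y ⬝ᵥ C *ᵥ x = ∑ i, (y i)^2 := by rw [dot_symm hC x y] at hxy; exact hxy
  have hqx : x ⬝ᵥ C *ᵥ x ≤ M * ∑ i, (x i)^2 := quad_le_of_psd_sub hhi x
  have hqy : y ⬝ᵥ C *ᵥ y ≤ M * ∑ i, (y i)^2 := quad_le_of_psd_sub hhi y
  have key : ∑ i, (y i)^2 ≤ M^2 * ∑ i, (x i)^2 := by
    nlinarith [hz, hxy, hyx, hqy, hM,
      mul_le_mul_of_nonneg_left hqx (mul_pos hM hM).le]
  calc Real.sqrt (∑ i, (y i)^2) ≤ Real.sqrt (M^2 * ∑ i, (x i)^2) := Real.sqrt_le_sqrt key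
    _ = M * Real.sqrt (∑ i, (x i)^2) := by
        rw [Real.sqrt_mul (sq_nonneg M), Real.sqrt_sq hM.le]

lemma l2OpNorm_le_M {C : Matrix n n ℝ} {M : ℝ} (hM : 0 < M) (hC : C.IsSymm)
    (h0 : C.PosSemidef) (hhi : (M • (1 : Matrix n n ℝ) - C).PosSemidef) :
    l2OpNorm C ≤ M :=
  l2OpNorm_le_of_mulVec hM.le (mulVec_sq_le_of_bounds hM hC h0 hhi)

lemma posDef_of_lo {C : Matrix n n ℝ} {m : ℝ} (hm : 0 < m) (hherm : C.IsHermitian)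
    (hlo : (C - m • (1 : Matrix n n ℝ)).PosSemidef) : C.PosDef := by
  refine PosDef.of_dotProduct_mulVec_pos hherm fun w hw => ?_
  have h1 := quad_ge_of_psd_sub hlo w
  have h2 : 0 < ∑ i, (w i)^2 := by
    obtain ⟨i, hi⟩ := Function.ne_iff.mp hw
    exact Finset.sum_pos' (fun j _ => sq_nonneg _) ⟨i, Finset.mem_univ i,
      lt_of_le_of_ne (sq_nonneg _) (Ne.symm (pow_ne_zero 2 hi))⟩
  simp only [star_trivial]
  calc (0:ℝ) < m * ∑ i, (w i)^2 := by positivity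
    _ ≤ _ := h1

lemma inv_mulVec_cancel {C : Matrix n n ℝ} {m : ℝ} (hm : 0 < m) (hherm : C.IsHermitian)
    (hlo : (C - m • (1 : Matrix n n ℝ)).PosSemidef) (y : n → ℝ) :
    C *ᵥ (C⁻¹ *ᵥ y) = y := by
  rw [mulVec_mulVec, Matrix.mul_nonsing_inv _
    ((Matrix.isUnit_iff_isUnit_det C).mp (posDef_of_lo hm hherm hlo).isUnit), one_mulVec]

lemma mulVec_inv_cancel {C : Matrix n n ℝ} {m : ℝ} (hm : 0 < m) (hherm : C.IsHermitian)
    (hlo : (C - m • (1 : Matrix n n ℝ)).PosSemidef) (y : n → ℝ) :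
    C⁻¹ *ᵥ (C *ᵥ y) = y := by
  rw [mulVec_mulVec, Matrix.nonsing_inv_mul _
    ((Matrix.isUnit_iff_isUnit_det C).mp (posDef_of_lo hm hherm hlo).isUnit), one_mulVec]

lemma inv_mulVec_bound {C : Matrix n n ℝ} {m : ℝ} (hm : 0 < m) (hherm : C.IsHermitian)
    (hlo : (C - m • (1 : Matrix n n ℝ)).PosSemidef) (y : n → ℝ) :
    Real.sqrt (∑ i, ((C⁻¹ *ᵥ y) i)^2) ≤ m⁻¹ * Real.sqrt (∑ i, (y i)^2) := by
  set w := C⁻¹ *ᵥ y with hw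
  have h1 : m * ∑ i, (w i)^2 ≤ w ⬝ᵥ C *ᵥ w := quad_ge_of_psd_sub hlo w
  have h2 : C *ᵥ w = y := inv_mulVec_cancel hm hherm hlo y
  have h3 : w ⬝ᵥ y ≤ Real.sqrt (∑ i, (w i)^2) * Real.sqrt (∑ i, (y i)^2) :=
    Real.sum_mul_le_sqrt_mul_sqrt Finset.univ w y
  rw [h2] at h1
  set s := Real.sqrt (∑ i, (w i)^2) with hs
  have hs0 : 0 ≤ s := Real.sqrt_nonneg _
  have hss : s^2 = ∑ i, (w i)^2 := Real.sq_sqrt (Finset.sum_nonneg fun i _ => sq_nonneg _)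
  rcases eq_or_lt_of_le hs0 with h | h
  · rw [← h]; positivity
  · have : m * s^2 ≤ s * Real.sqrt (∑ i, (y i)^2) := by
      rw [hss]; exact h1.trans h3
    have hms : m * s ≤ Real.sqrt (∑ i, (y i)^2) := by
      nlinarith
    calc s = m⁻¹ * (m * s) := (inv_mul_cancel_left₀ hm.ne' s).symm
      _ ≤ m⁻¹ * Real.sqrt (∑ i, (y i)^2) :=
          mul_le_mul_of_nonneg_left hms (by positivity)

end Aux

section Aux2
variable {B O : Type*} [Fintype B] [Fintype O] [DecidableEq B] [DecidableEq O]

lemma submatrix_mulVec_inr (C : Matrix (B ⊕ O) (B ⊕ O) ℝ) {α : Type*} (f : α → B ⊕ O)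
    (u : O → ℝ) (i : α) :
    ((C.submatrix f Sum.inr) *ᵥ u) i = (C *ᵥ (Sum.elim 0 u)) (f i) := by
  simp [Matrix.mulVec, dotProduct, Fintype.sum_sum_type]

lemma elim_en2 (u : O → ℝ) : ∑ k, (Sum.elim (0 : B → ℝ) u k)^2 = ∑ o, (u o)^2 := by
  simp [Fintype.sum_sum_type]

lemma sum_inl_sq_le (F : (B ⊕ O) → ℝ) : ∑ b : B, (F (Sum.inl b))^2 ≤ ∑ k, (F k)^2 := by
  rw [Fintype.sum_sum_type]
  have : (0:ℝ) ≤ ∑ o : O, (F (Sum.inr o))^2 := Finset.sum_nonneg fun _ _ => sq_nonneg _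
  linarith

lemma sum_inr_sq_le (F : (B ⊕ O) → ℝ) : ∑ o : O, (F (Sum.inr o))^2 ≤ ∑ k, (F k)^2 := by
  rw [Fintype.sum_sum_type]
  have : (0:ℝ) ≤ ∑ b : B, (F (Sum.inl b))^2 := Finset.sum_nonneg fun _ _ => sq_nonneg _
  linarith

lemma block_bound_inl (C : Matrix (B ⊕ O) (B ⊕ O) ℝ) (u : O → ℝ) :
    Real.sqrt (∑ b : B, (((C.submatrix Sum.inl Sum.inr) *ᵥ u) b)^2) ≤
      l2OpNorm C * Real.sqrt (∑ o, (u o)^2) := by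
  calc Real.sqrt (∑ b : B, (((C.submatrix Sum.inl Sum.inr) *ᵥ u) b)^2)
      = Real.sqrt (∑ b : B, ((C *ᵥ (Sum.elim 0 u)) (Sum.inl b))^2) := by
        congr 1; exact Finset.sum_congr rfl fun b _ => by rw [submatrix_mulVec_inr]
    _ ≤ Real.sqrt (∑ k, ((C *ᵥ (Sum.elim 0 u)) k)^2) :=
        Real.sqrt_le_sqrt (sum_inl_sq_le _)
    _ ≤ l2OpNorm C * Real.sqrt (∑ k, (Sum.elim (0 : B → ℝ) u k)^2) := l2_mulVec_sqrt C _
    _ = l2OpNorm C * Real.sqrt (∑ o, (u o)^2) := by rw [elim_en2]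

lemma block_bound_inr (C : Matrix (B ⊕ O) (B ⊕ O) ℝ) (u : O → ℝ) :
    Real.sqrt (∑ o : O, (((C.submatrix Sum.inr Sum.inr) *ᵥ u) o)^2) ≤
      l2OpNorm C * Real.sqrt (∑ o, (u o)^2) := by
  calc Real.sqrt (∑ o : O, (((C.submatrix Sum.inr Sum.inr) *ᵥ u) o)^2)
      = Real.sqrt (∑ o : O, ((C *ᵥ (Sum.elim 0 u)) (Sum.inr o))^2) := by
        congr 1; exact Finset.sum_congr rfl fun o _ => by rw [submatrix_mulVec_inr]
    _ ≤ Real.sqrt (∑ k, ((C *ᵥ (Sum.elim 0 u)) k)^2) :=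
        Real.sqrt_le_sqrt (sum_inr_sq_le _)
    _ ≤ l2OpNorm C * Real.sqrt (∑ k, (Sum.elim (0 : B → ℝ) u k)^2) := l2_mulVec_sqrt C _
    _ = l2OpNorm C * Real.sqrt (∑ o, (u o)^2) := by rw [elim_en2]

lemma submatrix_inr_sub_smul_one (C : Matrix (B ⊕ O) (B ⊕ O) ℝ) (c : ℝ) :
    ((C - c • (1 : Matrix (B ⊕ O) (B ⊕ O) ℝ)).submatrix Sum.inr Sum.inr) =
      C.submatrix Sum.inr Sum.inr - c • (1 : Matrix O O ℝ) := by
  ext i j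
  simp [Matrix.one_apply, Sum.inr.injEq]

lemma submatrix_inr_smul_one_sub (C : Matrix (B ⊕ O) (B ⊕ O) ℝ) (c : ℝ) :
    ((c • (1 : Matrix (B ⊕ O) (B ⊕ O) ℝ) - C).submatrix Sum.inr Sum.inr) =
      c • (1 : Matrix O O ℝ) - C.submatrix Sum.inr Sum.inr := by
  ext i j
  simp [Matrix.one_apply, Sum.inr.injEq]

lemma posSemidef_submatrix_inr {C : Matrix (B ⊕ O) (B ⊕ O) ℝ} (h : C.PosSemidef) :
    (C.submatrix Sum.inr Sum.inr).PosSemidef := by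
  refine PosSemidef.of_dotProduct_mulVec_nonneg ?_ ?_
  · have := h.1
    rw [Matrix.IsHermitian] at this ⊢
    rw [Matrix.conjTranspose_submatrix, this]
  · intro x
    have h2 := h.dotProduct_mulVec_nonneg (Sum.elim 0 x)
    simp only [star_trivial] at h2 ⊢
    have : x ⬝ᵥ (C.submatrix Sum.inr Sum.inr) *ᵥ x =
        (Sum.elim (0 : B → ℝ) x) ⬝ᵥ C *ᵥ (Sum.elim 0 x) := by
      rw [dotProduct, dotProduct, Fintype.sum_sum_type]
      simp [submatrix_mulVec_inr]
    rw [this]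
    exact h2

lemma isSymm_submatrix_inr {C : Matrix (B ⊕ O) (B ⊕ O) ℝ} (h : C.IsSymm) :
    (C.submatrix Sum.inr Sum.inr).IsSymm := by
  rw [Matrix.IsSymm] at h ⊢
  rw [Matrix.transpose_submatrix, h]

lemma isHermitian_of_isSymm {n : Type*} {C : Matrix n n ℝ} (h : C.IsSymm) : C.IsHermitian := by
  rw [Matrix.IsHermitian]
  rw [Matrix.IsSymm] at h
  simpa using h

lemma psd_smul_one {n : Type*} [Fintype n] [DecidableEq n] {c : ℝ} (hc : 0 ≤ c) :
    (c • (1 : Matrix n n ℝ)).PosSemidef := by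
  refine PosSemidef.of_dotProduct_mulVec_nonneg ?_ ?_
  · rw [Matrix.IsHermitian]
    simp
  · intro x
    simp only [star_trivial, Matrix.smul_mulVec, Matrix.one_mulVec, dotProduct_smul,
      smul_eq_mul]
    have : x ⬝ᵥ x = ∑ i, (x i)^2 := by simp [dotProduct, sq]
    rw [this]
    have : (0:ℝ) ≤ ∑ i, (x i)^2 := Finset.sum_nonneg fun _ _ => sq_nonneg _
    positivity

lemma psd_of_lo {n : Type*} [Fintype n] [DecidableEq n] {C : Matrix n n ℝ} {c : ℝ} (hc : 0 ≤ c)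
    (h : (C - c • (1 : Matrix n n ℝ)).PosSemidef) : C.PosSemidef := by
  have := (h.add (psd_smul_one (n := n) hc))
  simpa using this

end Aux2
section Aux3

lemma sqrt_sum_sq_sub_le {n : Type*} [Fintype n] (f g : n → ℝ) :
    Real.sqrt (∑ i, (f i - g i)^2) ≤
      Real.sqrt (∑ i, (f i)^2) + Real.sqrt (∑ i, (g i)^2) := by
  set A := Real.sqrt (∑ i, (f i)^2) with hA
  set Bq := Real.sqrt (∑ i, (g i)^2) with hB
  have hA0 : 0 ≤ A := Real.sqrt_nonneg _
  have hB0 : 0 ≤ Bq := Real.sqrt_nonneg _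
  have hAsq : A^2 = ∑ i, (f i)^2 := Real.sq_sqrt (Finset.sum_nonneg fun _ _ => sq_nonneg _)
  have hBsq : Bq^2 = ∑ i, (g i)^2 := Real.sq_sqrt (Finset.sum_nonneg fun _ _ => sq_nonneg _)
  have hcs : ∑ i, f i * (-g i) ≤ A * Bq := by
    have := Real.sum_mul_le_sqrt_mul_sqrt Finset.univ f (fun i => -g i)
    simpa [neg_sq] using this
  have hexp : ∑ i, (f i - g i)^2 =
      (∑ i, (f i)^2) + 2 * (∑ i, f i * (-g i)) + ∑ i, (g i)^2 := by
    rw [Finset.mul_sum, ← Finset.sum_add_distrib, ← Finset.sum_add_distrib]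
    exact Finset.sum_congr rfl fun i _ => by ring
  have hle : ∑ i, (f i - g i)^2 ≤ (A + Bq)^2 := by
    rw [hexp]; nlinarith [hcs, hAsq, hBsq]
  calc Real.sqrt (∑ i, (f i - g i)^2) ≤ Real.sqrt ((A + Bq)^2) := Real.sqrt_le_sqrt hle
    _ = A + Bq := Real.sqrt_sq (by positivity)

variable {B O : Type*} [Fintype B] [Fintype O] [DecidableEq B] [DecidableEq O]

lemma pointwise_bound {m M : ℝ} (hm : 0 < m) (hmM : m ≤ M)
    {K P : Matrix (B ⊕ O) (B ⊕ O) ℝ} (hKsymm : K.IsSymm)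
    (hKlo : (K - m • (1 : Matrix (B ⊕ O) (B ⊕ O) ℝ)).PosSemidef)
    (hKhi : (M • (1 : Matrix (B ⊕ O) (B ⊕ O) ℝ) - K).PosSemidef)
    (hPsymm : P.IsSymm)
    (hPlo : (P - m • (1 : Matrix (B ⊕ O) (B ⊕ O) ℝ)).PosSemidef)
    {a : B → ℝ} (ha : ∑ b, (a b)^2 = 1) (x : O → ℝ) :
    ((∑ o, ((P.submatrix Sum.inl Sum.inr * (P.submatrix Sum.inr Sum.inr)⁻¹).vecMul a) o * x o)
      - ∑ o, ((K.submatrix Sum.inl Sum.inr * (K.submatrix Sum.inr Sum.inr)⁻¹).vecMul a) o * x o)^2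
    ≤ ((m + M) / m^2)^2 * ((l2OpNorm (P - K))^2 * ∑ o, (x o)^2) := by
  have hM : 0 < M := lt_of_lt_of_le hm hmM
  set KO := K.submatrix Sum.inr Sum.inr with hKO
  set PO := P.submatrix Sum.inr Sum.inr with hPO
  set KBO := K.submatrix Sum.inl Sum.inr with hKBO
  set PBO := P.submatrix Sum.inl Sum.inr with hPBO
  set D := P - K with hD
  -- transfers
  have hKOlo : (KO - m • (1 : Matrix O O ℝ)).PosSemidef := by
    rw [← submatrix_inr_sub_smul_one]; exact posSemidef_submatrix_inr hKlo
  have hPOlo : (PO - m • (1 : Matrix O O ℝ)).PosSemidef := by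
    rw [← submatrix_inr_sub_smul_one]; exact posSemidef_submatrix_inr hPlo
  have hKOherm : KO.IsHermitian := isHermitian_of_isSymm (isSymm_submatrix_inr hKsymm)
  have hPOherm : PO.IsHermitian := isHermitian_of_isSymm (isSymm_submatrix_inr hPsymm)
  have hK0 : K.PosSemidef := psd_of_lo hm.le hKlo
  have hKM : l2OpNorm K ≤ M := l2OpNorm_le_M hM hKsymm hK0 hKhi
  -- vectors
  set u := PO⁻¹ *ᵥ x with hu
  set v := KO⁻¹ *ᵥ x with hv
  have hPOu : PO *ᵥ u = x := inv_mulVec_cancel hm hPOherm hPOlo x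
  -- difference as dot product
  set w1 := (D.submatrix Sum.inl Sum.inr) *ᵥ u with hw1
  set w2 := KBO *ᵥ (KO⁻¹ *ᵥ ((D.submatrix Sum.inr Sum.inr) *ᵥ u)) with hw2
  have hDBO : D.submatrix Sum.inl Sum.inr = PBO - KBO := by
    rw [hD, Matrix.submatrix_sub]; rfl
  have hDO : D.submatrix Sum.inr Sum.inr = PO - KO := by
    rw [hD, Matrix.submatrix_sub]; rfl
  have hvu : KO⁻¹ *ᵥ ((D.submatrix Sum.inr Sum.inr) *ᵥ u) = v - u := by
    rw [hDO, Matrix.sub_mulVec, hPOu, Matrix.mulVec_sub, hv,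
      mulVec_inv_cancel hm hKOherm hKOlo u]
  have hwdecomp : PBO *ᵥ u - KBO *ᵥ v = w1 - w2 := by
    rw [hw1, hw2, hvu, hDBO, Matrix.sub_mulVec, Matrix.mulVec_sub]
    abel
  have hdiff : (∑ o, ((PBO * PO⁻¹).vecMul a) o * x o)
      - ∑ o, ((KBO * KO⁻¹).vecMul a) o * x o = a ⬝ᵥ (w1 - w2) := by
    have e1 : ∑ o, ((PBO * PO⁻¹).vecMul a) o * x o = a ⬝ᵥ (PBO *ᵥ u) := by
      rw [show a ⬝ᵥ (PBO *ᵥ u) = a ⬝ᵥ ((PBO * PO⁻¹) *ᵥ x) from by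
        rw [← Matrix.mulVec_mulVec, hu],
        Matrix.dotProduct_mulVec]
      rfl
    have e2 : ∑ o, ((KBO * KO⁻¹).vecMul a) o * x o = a ⬝ᵥ (KBO *ᵥ v) := by
      rw [show a ⬝ᵥ (KBO *ᵥ v) = a ⬝ᵥ ((KBO * KO⁻¹) *ᵥ x) from by
        rw [← Matrix.mulVec_mulVec, hv],
        Matrix.dotProduct_mulVec]
      rfl
    rw [e1, e2, ← dotProduct_sub, hwdecomp]
  -- norm bounds
  set ε := l2OpNorm D with hε
  have hε0 : 0 ≤ ε := l2OpNorm_nonneg D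
  set t := Real.sqrt (∑ o, (x o)^2) with ht
  have ht0 : 0 ≤ t := Real.sqrt_nonneg _
  have hu2 : Real.sqrt (∑ o, (u o)^2) ≤ m⁻¹ * t := inv_mulVec_bound hm hPOherm hPOlo x
  have hw1b : Real.sqrt (∑ b : B, (w1 b)^2) ≤ ε * (m⁻¹ * t) := by
    calc Real.sqrt (∑ b : B, (w1 b)^2) ≤ ε * Real.sqrt (∑ o, (u o)^2) := block_bound_inl D u
      _ ≤ ε * (m⁻¹ * t) := mul_le_mul_of_nonneg_left hu2 hε0
  have hDOu : Real.sqrt (∑ o : O, (((D.submatrix Sum.inr Sum.inr) *ᵥ u) o)^2) ≤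
      ε * (m⁻¹ * t) := by
    calc Real.sqrt (∑ o : O, (((D.submatrix Sum.inr Sum.inr) *ᵥ u) o)^2)
        ≤ ε * Real.sqrt (∑ o, (u o)^2) := block_bound_inr D u
      _ ≤ ε * (m⁻¹ * t) := mul_le_mul_of_nonneg_left hu2 hε0
  have hz2 : Real.sqrt (∑ o : O, ((KO⁻¹ *ᵥ ((D.submatrix Sum.inr Sum.inr) *ᵥ u)) o)^2) ≤
      m⁻¹ * (ε * (m⁻¹ * t)) := by
    calc Real.sqrt (∑ o : O, ((KO⁻¹ *ᵥ ((D.submatrix Sum.inr Sum.inr) *ᵥ u)) o)^2)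
        ≤ m⁻¹ * Real.sqrt (∑ o : O, (((D.submatrix Sum.inr Sum.inr) *ᵥ u) o)^2) :=
          inv_mulVec_bound hm hKOherm hKOlo _
      _ ≤ m⁻¹ * (ε * (m⁻¹ * t)) := mul_le_mul_of_nonneg_left hDOu (by positivity)
  have hw2b : Real.sqrt (∑ b : B, (w2 b)^2) ≤ M * (m⁻¹ * (ε * (m⁻¹ * t))) := by
    calc Real.sqrt (∑ b : B, (w2 b)^2)
        ≤ l2OpNorm K * Real.sqrt (∑ o : O, ((KO⁻¹ *ᵥ ((D.submatrix Sum.inr Sum.inr) *ᵥ u)) o)^2) :=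
          block_bound_inl K _
      _ ≤ M * (m⁻¹ * (ε * (m⁻¹ * t))) := by
          apply mul_le_mul hKM hz2 (Real.sqrt_nonneg _) hM.le
  have hw : Real.sqrt (∑ b : B, ((w1 - w2) b)^2) ≤ ((m + M) / m^2) * (ε * t) := by
    calc Real.sqrt (∑ b : B, ((w1 - w2) b)^2)
        = Real.sqrt (∑ b : B, (w1 b - w2 b)^2) := rfl
      _ ≤ Real.sqrt (∑ b : B, (w1 b)^2) + Real.sqrt (∑ b : B, (w2 b)^2) :=
          sqrt_sum_sq_sub_le w1 w2
      _ ≤ ε * (m⁻¹ * t) + M * (m⁻¹ * (ε * (m⁻¹ * t))) := add_le_add hw1b hw2b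
      _ = ((m + M) / m^2) * (ε * t) := by field_simp
  -- finish
  rw [hdiff]
  have hdot : (a ⬝ᵥ (w1 - w2))^2 ≤ (∑ b, (a b)^2) * ∑ b : B, ((w1 - w2) b)^2 :=
    Finset.sum_mul_sq_le_sq_mul_sq Finset.univ a (w1 - w2)
  rw [ha, one_mul] at hdot
  have hsq : ∑ b : B, ((w1 - w2) b)^2 ≤ (((m + M) / m^2) * (ε * t))^2 := by
    have h1 : (Real.sqrt (∑ b : B, ((w1 - w2) b)^2))^2 ≤ (((m + M) / m^2) * (ε * t))^2 := by
      apply pow_le_pow_left₀ (Real.sqrt_nonneg _) hw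
    rwa [Real.sq_sqrt (Finset.sum_nonneg fun _ _ => sq_nonneg _)] at h1
  calc (a ⬝ᵥ (w1 - w2))^2 ≤ ∑ b : B, ((w1 - w2) b)^2 := hdot
    _ ≤ (((m + M) / m^2) * (ε * t))^2 := hsq
    _ = ((m + M) / m^2)^2 * ((l2OpNorm (P - K))^2 * ∑ o, (x o)^2) := by
        rw [mul_pow, mul_pow, ht, Real.sq_sqrt (Finset.sum_nonneg fun _ _ => sq_nonneg _), hε, hD]

end Aux3
section Aux4

lemma l2OpNorm_sub_le {n : Type*} [Fintype n] [DecidableEq n] (P K : Matrix n n ℝ) :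
    l2OpNorm (P - K) ≤ l2OpNorm P + l2OpNorm K := by
  unfold l2OpNorm
  rw [map_sub, map_sub]
  exact norm_sub_le _ _

lemma measurable_l2OpNorm {n : Type*} [Fintype n] [DecidableEq n]
    {Ω : Type*} [MeasurableSpace Ω] (F : Ω → Matrix n n ℝ)
    (hF : ∀ i j, Measurable fun ω => F ω i j) :
    Measurable fun ω => l2OpNorm (F ω) := by
  let L : (n → n → ℝ) →ₗ[ℝ] (EuclideanSpace ℝ n →L[ℝ] EuclideanSpace ℝ n) :=
    { toFun := fun f => LinearMap.toContinuousLinearMap (Matrix.toEuclideanLin (Matrix.of f))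
      map_add' := fun f g => by
        show LinearMap.toContinuousLinearMap
          (Matrix.toEuclideanLin (Matrix.of f + Matrix.of g)) = _
        rw [map_add, map_add]
      map_smul' := fun c f => by
        show LinearMap.toContinuousLinearMap
          (Matrix.toEuclideanLin (c • Matrix.of f)) = _
        rw [_root_.map_smul, _root_.map_smul]
        rfl }
  have hL : Continuous L := L.continuous_of_finiteDimensional
  have : (fun ω => l2OpNorm (F ω)) = fun ω => ‖L (fun i j => F ω i j)‖ := rfl
  rw [this]
  exact (continuous_norm.comp hL).measurable.comp
    (measurable_pi_lambda _ fun i => measurable_pi_lambda _ fun j => hF i j)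

end Aux4

theorem stmt19 {B O : Type*} [Fintype B] [Fintype O] [Nonempty B] [Nonempty O]
    [DecidableEq B] [DecidableEq O]
    (m M : ℝ) (hm : 0 < m) (hmM : m ≤ M)
    (K : Matrix (B ⊕ O) (B ⊕ O) ℝ) (hKsymm : K.IsSymm)
    (hKlo : (K - m • (1 : Matrix (B ⊕ O) (B ⊕ O) ℝ)).PosSemidef)
    (hKhi : (M • (1 : Matrix (B ⊕ O) (B ⊕ O) ℝ) - K).PosSemidef)
    {Ω : Type*} [MeasurableSpace Ω] (μ : Measure Ω) [IsProbabilityMeasure μ]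
    (X : Ω → (B ⊕ O) → ℝ) (hXmeas : Measurable X)
    (hXint : Integrable (fun ω => (∑ i : O, (X ω (Sum.inr i)) ^ 2) ^ 2) μ)
    (Khat : Ω → Matrix (B ⊕ O) (B ⊕ O) ℝ) (hKhatmeas : ∀ u v : B ⊕ O, Measurable fun ω => Khat ω u v)
    (hKhatsymm : ∀ᵐ ω ∂μ, (Khat ω).IsSymm)
    (hKhatlo : ∀ᵐ ω ∂μ, ((Khat ω) - m • (1 : Matrix (B ⊕ O) (B ⊕ O) ℝ)).PosSemidef)
    (hKhathi : ∀ᵐ ω ∂μ, (M • (1 : Matrix (B ⊕ O) (B ⊕ O) ℝ) - Khat ω).PosSemidef)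
    (r : ℝ) (hr : 0 ≤ r)
    (hKhatK : ∫ ω, (l2OpNorm (Khat ω - K)) ^ 4 ∂μ ≤ r ^ 4)
    (a : B → ℝ) (ha : ∑ b, (a b) ^ 2 = 1)
    (Zbar Zhat : Ω → ℝ)
    (hZbar : Zbar = fun ω => ∑ o : O,
      ((K.submatrix Sum.inl Sum.inr * (K.submatrix Sum.inr Sum.inr)⁻¹).vecMul a) o
        * X ω (Sum.inr o))
    (hZhat : Zhat = fun ω => ∑ o : O,
      (((Khat ω).submatrix Sum.inl Sum.inr *
          ((Khat ω).submatrix Sum.inr Sum.inr)⁻¹).vecMul a) o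
        * X ω (Sum.inr o)) :
    Real.sqrt (∫ ω, (Zhat ω - Zbar ω) ^ 2 ∂μ) ≤
      (m + M) / m ^ 2 *
        (∫ ω, (∑ i : O, (X ω (Sum.inr i)) ^ 2) ^ 2 ∂μ) ^ ((1 : ℝ) / 4) * r := by
  have hM : 0 < M := lt_of_lt_of_le hm hmM
  set c : ℝ := (m + M) / m ^ 2 with hc
  have hc0 : 0 < c := by positivity
  set S : Ω → ℝ := fun ω => ∑ i : O, (X ω (Sum.inr i))^2 with hS
  set ε : Ω → ℝ := fun ω => l2OpNorm (Khat ω - K) with hεdef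
  have hSmeas : Measurable S := by
    apply Finset.measurable_sum
    intro i _
    exact ((measurable_pi_apply (Sum.inr i)).comp hXmeas).pow_const 2
  have hS0 : ∀ ω, 0 ≤ S ω := fun ω => Finset.sum_nonneg fun _ _ => sq_nonneg _
  have hεmeas : Measurable ε :=
    measurable_l2OpNorm _ (fun i j => (hKhatmeas i j).sub measurable_const)
  have hε0 : ∀ ω, 0 ≤ ε ω := fun ω => l2OpNorm_nonneg _
  have hεM : ∀ᵐ ω ∂μ, ε ω ≤ 2 * M := by
    filter_upwards [hKhatsymm, hKhatlo, hKhathi] with ω h1 h2 h3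
    have hP : l2OpNorm (Khat ω) ≤ M := l2OpNorm_le_M hM h1 (psd_of_lo hm.le h2) h3
    have hK : l2OpNorm K ≤ M := l2OpNorm_le_M hM hKsymm (psd_of_lo hm.le hKlo) hKhi
    calc ε ω ≤ l2OpNorm (Khat ω) + l2OpNorm K := l2OpNorm_sub_le _ _
      _ ≤ 2 * M := by linarith
  have hae : ∀ᵐ ω ∂μ, (Zhat ω - Zbar ω)^2 ≤ c^2 * (ε ω^2 * S ω) := by
    filter_upwards [hKhatsymm, hKhatlo, hKhathi] with ω h1 h2 h3
    rw [hZhat, hZbar]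
    exact pointwise_bound hm hmM hKsymm hKlo hKhi h1 h2 ha (fun o => X ω (Sum.inr o))
  have hS_int : Integrable S μ := by
    have h1 : Integrable (fun ω => (1 + (S ω)^2)/2) μ :=
      ((integrable_const 1).add hXint).div_const 2
    refine h1.mono' hSmeas.aestronglyMeasurable ?_
    filter_upwards with ω
    rw [Real.norm_of_nonneg (hS0 ω)]
    nlinarith [sq_nonneg (S ω - 1)]
  have hε2S_int : Integrable (fun ω => ε ω^2 * S ω) μ := by
    refine (hS_int.const_mul ((2*M)^2)).mono'
      (((hεmeas.pow_const 2).mul hSmeas).aestronglyMeasurable) ?_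
    filter_upwards [hεM] with ω hω
    rw [Real.norm_of_nonneg (mul_nonneg (sq_nonneg _) (hS0 ω))]
    exact mul_le_mul_of_nonneg_right (pow_le_pow_left₀ (hε0 ω) hω 2) (hS0 ω)
  have hIS : 0 ≤ ∫ ω, (S ω)^2 ∂μ := integral_nonneg fun ω => sq_nonneg _
  have hRHS0 : 0 ≤ c * (∫ ω, (S ω)^2 ∂μ) ^ ((1:ℝ)/4) * r :=
    mul_nonneg (mul_nonneg hc0.le (Real.rpow_nonneg hIS _)) hr
  by_cases hZint : Integrable (fun ω => (Zhat ω - Zbar ω)^2) μ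
  · have h1 : ∫ ω, (Zhat ω - Zbar ω)^2 ∂μ ≤ ∫ ω, c^2 * (ε ω^2 * S ω) ∂μ :=
      integral_mono_ae hZint (hε2S_int.const_mul _) hae
    have h2 : ∫ ω, c^2 * (ε ω^2 * S ω) ∂μ = c^2 * ∫ ω, ε ω^2 * S ω ∂μ :=
      integral_const_mul _ _
    have hconj : Real.HolderConjugate 2 2 := Real.HolderConjugate.two_two
    have h2eq : ENNReal.ofReal (2:ℝ) = 2 := by
      rw [ENNReal.ofReal_ofNat]
    have hmemε : MemLp (fun ω => ε ω^2) (ENNReal.ofReal 2) μ := by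
      rw [h2eq]
      refine MemLp.of_bound ((hεmeas.pow_const 2).aestronglyMeasurable) ((2*M)^2) ?_
      filter_upwards [hεM] with ω hω
      rw [Real.norm_of_nonneg (sq_nonneg _)]
      exact pow_le_pow_left₀ (hε0 ω) hω 2
    have hmemS : MemLp S (ENNReal.ofReal 2) μ := by
      rw [h2eq]
      exact (memLp_two_iff_integrable_sq hSmeas.aestronglyMeasurable).mpr hXint
    have h3 : ∫ ω, ε ω^2 * S ω ∂μ ≤
        (∫ ω, (ε ω^2)^(2:ℝ) ∂μ)^((1:ℝ)/2) * (∫ ω, (S ω)^(2:ℝ) ∂μ)^((1:ℝ)/2) := by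
      have := integral_mul_le_Lp_mul_Lq_of_nonneg hconj
        (Filter.Eventually.of_forall fun ω => sq_nonneg (ε ω))
        (Filter.Eventually.of_forall hS0) hmemε hmemS
      simpa using this
    have e4 : (fun ω => (ε ω^2)^(2:ℝ)) = fun ω => ε ω^4 := by
      funext ω
      rw [show (2:ℝ) = ((2:ℕ):ℝ) by norm_num, Real.rpow_natCast]
      ring
    have e5 : (fun ω => (S ω)^(2:ℝ)) = fun ω => (S ω)^2 := by
      funext ω
      rw [show (2:ℝ) = ((2:ℕ):ℝ) by norm_num, Real.rpow_natCast]
    rw [e4, e5] at h3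
    have h5 : (∫ ω, ε ω^4 ∂μ)^((1:ℝ)/2) ≤ r^2 := by
      have h := Real.rpow_le_rpow (integral_nonneg fun ω => by positivity) hKhatK
        (by norm_num : (0:ℝ) ≤ 1/2)
      calc (∫ ω, ε ω^4 ∂μ)^((1:ℝ)/2) ≤ (r^4)^((1:ℝ)/2) := h
        _ = r^2 := by
            rw [show r^4 = (r^2)^2 by ring, ← Real.rpow_natCast (r^2) 2,
              ← Real.rpow_mul (sq_nonneg r)]
            norm_num
    have hJ0 : 0 ≤ (∫ ω, (S ω)^2 ∂μ)^((1:ℝ)/2) := Real.rpow_nonneg hIS _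
    have h6 : ∫ ω, (Zhat ω - Zbar ω)^2 ∂μ ≤
        c^2 * (r^2 * (∫ ω, (S ω)^2 ∂μ)^((1:ℝ)/2)) := by
      have hstep : ∫ ω, ε ω^2 * S ω ∂μ ≤ r^2 * (∫ ω, (S ω)^2 ∂μ)^((1:ℝ)/2) :=
        h3.trans (mul_le_mul_of_nonneg_right h5 hJ0)
      calc ∫ ω, (Zhat ω - Zbar ω)^2 ∂μ ≤ ∫ ω, c^2 * (ε ω^2 * S ω) ∂μ := h1
        _ = c^2 * ∫ ω, ε ω^2 * S ω ∂μ := h2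
        _ ≤ c^2 * (r^2 * (∫ ω, (S ω)^2 ∂μ)^((1:ℝ)/2)) :=
            mul_le_mul_of_nonneg_left hstep (sq_nonneg c)
    have h7 := Real.sqrt_le_sqrt h6
    refine h7.trans (le_of_eq ?_)
    have hJ : Real.sqrt ((∫ ω, (S ω)^2 ∂μ)^((1:ℝ)/2)) = (∫ ω, (S ω)^2 ∂μ)^((1:ℝ)/4) := by
      rw [Real.sqrt_eq_rpow, ← Real.rpow_mul hIS]
      norm_num
    rw [Real.sqrt_mul (sq_nonneg c), Real.sqrt_sq hc0.le, Real.sqrt_mul (sq_nonneg r),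
      Real.sqrt_sq hr, hJ]
    ring
  · rw [integral_undef hZint, Real.sqrt_zero]
    exact hRHS0
end
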